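/- Let B_1, …, B_n be subspaces of a finite-dimensional vector space W and let β ⊆ {1,…,n}. Then there exists a subspace A of W such that, for any complementary subspace A* of A (with associated projection T_A onto A* along A): (1) dim T_A(B_j) = dim⟨B_i : i∈β⟩ − dim⟨B_i : i∈β∖{j}⟩ for every j ∈ β; (2) dim⟨T_A(B_j) : j∈β⟩ = ∑_{j∈β} dim T_A(B_j); and (3) dim A = dim⟨B_j : j∈β⟩ − ∑_{j∈β} (dim⟨B_i : i∈β⟩ − dim⟨B_i : i∈β∖{j}⟩). -/

import Mathlib

open Module Submodule

section Helpers

variable {K : Type} [Field K]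

/-- rank-nullity for `map f p`. -/
lemma aux_finrank_map_add {V V' : Type} [AddCommGroup V] [Module K V] [FiniteDimensional K V]
    [AddCommGroup V'] [Module K V'] (f : V →ₗ[K] V') (p : Submodule K V) :
    finrank K ↥(map f p) + finrank K ↥(p ⊓ LinearMap.ker f) = finrank K ↥p := by
  have h := LinearMap.finrank_range_add_finrank_ker (f.comp p.subtype)
  have hr : LinearMap.range (f.comp p.subtype) = map f p := by
    rw [LinearMap.range_comp, Submodule.range_subtype]
  have hk : LinearMap.ker (f.comp p.subtype) = comap p.subtype (p ⊓ LinearMap.ker f) := by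
    rw [LinearMap.ker_comp, Submodule.comap_inf, Submodule.comap_subtype_self, top_inf_eq]
  have he : finrank K ↥(comap p.subtype (p ⊓ LinearMap.ker f)) = finrank K ↥(p ⊓ LinearMap.ker f) :=
    (Submodule.comapSubtypeEquivOfLe inf_le_left).finrank_eq
  rw [hr, hk, he] at h
  simpa using h

lemma aux_finrank_map_eq_of_ker_eq {V V' V'' : Type} [AddCommGroup V] [Module K V]
    [FiniteDimensional K V] [AddCommGroup V'] [Module K V'] [AddCommGroup V''] [Module K V'']
    (f : V →ₗ[K] V') (g : V →ₗ[K] V'') (h : LinearMap.ker f = LinearMap.ker g)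
    (p : Submodule K V) : finrank K ↥(map f p) = finrank K ↥(map g p) := by
  have h1 := aux_finrank_map_add f p
  have h2 := aux_finrank_map_add g p
  rw [h] at h1
  omega

lemma aux_map_finset_sup {V V' : Type} [AddCommGroup V] [Module K V]
    [AddCommGroup V'] [Module K V'] (f : V →ₗ[K] V') {n : ℕ} (B : Fin n → Submodule K V)
    (s : Finset (Fin n)) : map f (s.sup B) = s.sup fun i => map f (B i) := by
  classical
  induction s using Finset.induction_on with
  | empty => simp
  | insert _ _ h ih => rw [Finset.sup_insert, Finset.sup_insert, Submodule.map_sup, ih]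

lemma aux_finrank_mkQ_span {V : Type} [AddCommGroup V] [Module K V] [FiniteDimensional K V]
    {v : V} (hv : v ≠ 0) {T : Submodule K V} (hT : v ∈ T) :
    finrank K ↥(map (span K {v}).mkQ T) + 1 = finrank K ↥T := by
  have h := aux_finrank_map_add (span K {v}).mkQ T
  rw [Submodule.ker_mkQ] at h
  have hle : span K {v} ≤ T := (span_singleton_le_iff_mem v T).mpr hT
  rw [inf_eq_right.mpr hle, finrank_span_singleton hv] at h
  exact h

/-- If the `B j`, `j ∈ β`, are independent then the dimension of their sup is the sum. -/
lemma aux_finrank_sup_indep {V : Type} [AddCommGroup V] [Module K V] [FiniteDimensional K V]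
    {n : ℕ} (B : Fin n → Submodule K V) (β : Finset (Fin n))
    (h : ∀ j ∈ β, B j ⊓ (β.erase j).sup B = ⊥) :
    finrank K ↥(β.sup B) = ∑ j ∈ β, finrank K ↥(B j) := by
  classical
  induction β using Finset.induction_on with
  | empty => simp
  | @insert a s ha ih =>
    rw [Finset.sup_insert, Finset.sum_insert ha]
    have hinf : B a ⊓ s.sup B = ⊥ := by
      have := h a (Finset.mem_insert_self a s)
      rwa [Finset.erase_insert ha] at this
    have hsum := Submodule.finrank_sup_add_finrank_inf_eq (B a) (s.sup B)
    rw [hinf, finrank_bot, add_zero] at hsum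
    rw [hsum, ih]
    intro j hj
    have hja : j ≠ a := fun hja => ha (hja ▸ hj)
    refine le_bot_iff.mp ?_
    have := h j (Finset.mem_insert_of_mem hj)
    calc B j ⊓ (s.erase j).sup B ≤ B j ⊓ ((insert a s).erase j).sup B := by
          refine inf_le_inf_left _ (Finset.sup_mono ?_)
          exact Finset.erase_subset_erase j (Finset.subset_insert a s)
      _ = ⊥ := this

/-- Core: a subspace `A ≤ sup B` so that in `W ⧸ A` the images of the `B j` have the
prescribed dimensions and sum independently. -/
lemma aux_core (K : Type) [Field K] :
    ∀ (N : ℕ) (W : Type) [AddCommGroup W] [Module K W] [FiniteDimensional K W]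
      {n : ℕ} (B : Fin n → Submodule K W) (β : Finset (Fin n)),
      finrank K ↥(β.sup B) ≤ N →
      ∃ A : Submodule K W, A ≤ β.sup B ∧
        (∀ j ∈ β, finrank K ↥(map A.mkQ (B j)) + finrank K ↥((β.erase j).sup B)
            = finrank K ↥(β.sup B)) ∧
        finrank K ↥(map A.mkQ (β.sup B)) = ∑ j ∈ β, finrank K ↥(map A.mkQ (B j)) := by
  intro N
  induction N with
  | zero =>
    intro W _ _ _ n B β hN
    -- everything in the sup is zero, in particular all B j ⊓ ... = ⊥
    have hS : β.sup B = ⊥ := by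
      have := Submodule.finrank_eq_zero.mp (Nat.le_zero.mp hN)
      exact this
    have hBj : ∀ j ∈ β, B j = ⊥ := fun j hj =>
      le_bot_iff.mp (hS ▸ Finset.le_sup (f := B) hj)
    refine ⟨⊥, bot_le, ?_, ?_⟩
    · intro j hj
      have hSj : (β.erase j).sup B ≤ β.sup B := Finset.sup_mono (Finset.erase_subset j β)
      have hSj' : (β.erase j).sup B = ⊥ := le_bot_iff.mp (hS ▸ hSj)
      rw [hBj j hj, hSj', hS]
      simp
    · rw [hS]
      rw [Finset.sum_congr rfl fun j hj => by rw [hBj j hj]]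
      rw [Submodule.map_bot, finrank_bot]
      simp
  | succ N ih =>
    intro W _ _ _ n B β hN
    by_cases hindep : ∀ j ∈ β, B j ⊓ (β.erase j).sup B = ⊥
    · -- base case: take A = ⊥
      have hrk : ∀ p : Submodule K W, finrank K ↥(map (⊥ : Submodule K W).mkQ p) = finrank K ↥p := by
        intro p
        have h := aux_finrank_map_add (⊥ : Submodule K W).mkQ p
        rw [Submodule.ker_mkQ, inf_bot_eq, finrank_bot, add_zero] at h
        exact h
      refine ⟨⊥, bot_le, ?_, ?_⟩
      · intro j hj
        rw [hrk]
        have hsup : β.sup B = B j ⊔ (β.erase j).sup B := by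
          conv_lhs => rw [← Finset.insert_erase hj]
          rw [Finset.sup_insert]
        have h := Submodule.finrank_sup_add_finrank_inf_eq (B j) ((β.erase j).sup B)
        rw [hindep j hj, finrank_bot, add_zero] at h
        rw [hsup, ← h]
      · rw [hrk, aux_finrank_sup_indep B β hindep]
        exact Finset.sum_congr rfl fun j _ => (hrk (B j)).symm
    · push_neg at hindep
      obtain ⟨j₀, hj₀, hne⟩ := hindep
      obtain ⟨v, hv, hv0⟩ := Submodule.ne_bot_iff _ |>.mp hne
      have hvB : v ∈ B j₀ := hv.1
      have hvS : v ∈ β.sup B := Finset.le_sup (f := B) hj₀ hvB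
      -- v belongs to every erased sup
      have hvSe : ∀ i ∈ β, v ∈ (β.erase i).sup B := by
        intro i hi
        by_cases hij : i = j₀
        · exact hij ▸ hv.2
        · exact Finset.le_sup (f := B) (Finset.mem_erase.mpr ⟨fun h => hij h.symm, hj₀⟩) hvB
      set q := (span K {v}).mkQ with hq
      have hsup' : ∀ s : Finset (Fin n), (s.sup fun i => map q (B i)) = map q (s.sup B) :=
        fun s => (aux_map_finset_sup q B s).symm
      have hd : finrank K ↥(β.sup fun i => map q (B i)) ≤ N := by
        have e1 := aux_finrank_mkQ_span hv0 hvS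
        rw [← hq] at e1
        rw [hsup' β]
        omega
      obtain ⟨A', hA'le, hA'1, hA'2⟩ := ih (W ⧸ span K {v}) (fun i => map q (B i)) β hd
      refine ⟨comap q A', ?_, ?_, ?_⟩
      -- the comap is below the sup
      · intro x hx
        have hqx : q x ∈ map q (β.sup B) := by rw [← hsup' β]; exact hA'le hx
        obtain ⟨s, hs, hqs⟩ := hqx
        have : x - s ∈ span K {v} := by
          rw [← Submodule.ker_mkQ (span K {v}), LinearMap.mem_ker, map_sub, hqs, sub_self]
        have hxs : x - s ∈ β.sup B :=
          (span_singleton_le_iff_mem v _).mpr hvS this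
        simpa using add_mem hxs hs
      · have hker : LinearMap.ker (comap q A').mkQ = LinearMap.ker (A'.mkQ.comp q) := by
          rw [Submodule.ker_mkQ, LinearMap.ker_comp, Submodule.ker_mkQ]
        have hmap : ∀ p : Submodule K W,
            finrank K ↥(map (comap q A').mkQ p) = finrank K ↥(map A'.mkQ (map q p)) := by
          intro p
          rw [aux_finrank_map_eq_of_ker_eq _ _ hker p, Submodule.map_comp]
        intro j hj
        have h1 := hA'1 j hj
        rw [hsup' β, hsup' (β.erase j)] at h1
        have e1 := aux_finrank_mkQ_span hv0 hvS
        have e2 := aux_finrank_mkQ_span hv0 (hvSe j hj)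
        rw [← hq] at e1 e2
        rw [hmap (B j)]
        omega
      · have hker : LinearMap.ker (comap q A').mkQ = LinearMap.ker (A'.mkQ.comp q) := by
          rw [Submodule.ker_mkQ, LinearMap.ker_comp, Submodule.ker_mkQ]
        have hmap : ∀ p : Submodule K W,
            finrank K ↥(map (comap q A').mkQ p) = finrank K ↥(map A'.mkQ (map q p)) := by
          intro p
          rw [aux_finrank_map_eq_of_ker_eq _ _ hker p, Submodule.map_comp]
        rw [hmap (β.sup B), ← hsup' β, hA'2]
        exact Finset.sum_congr rfl fun j _ => (hmap (B j)).symm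

end Helpers

/-- for subspaces `B_1, …, B_n` of a finite-dimensional space `W` and
`β ⊆ {1,…,n}` there is a subspace `A` such that, for any complement `A*` of `A` with
projection `π` onto `A*` along `A`:
(1) `dim T_A(B_j) = dim⟨B_i : i∈β⟩ − dim⟨B_i : i∈β∖{j}⟩` for every `j ∈ β`;
(2) `dim⟨T_A(B_j) : j∈β⟩ = ∑_{j∈β} dim T_A(B_j)`;
(3) `dim A = dim⟨B_j : j∈β⟩ − ∑_{j∈β} (dim⟨B_i : i∈β⟩ − dim⟨B_i : i∈β∖{j}⟩)`. -/
theorem exists_subspace_projection_independence {K W : Type} [Field K] [AddCommGroup W]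
    [Module K W] [FiniteDimensional K W]
    (n : ℕ) (B : Fin n → Submodule K W) (β : Finset (Fin n)) :
    ∃ A : Submodule K W,
      ∀ (Astar : Submodule K W) (π : W →ₗ[K] W),
        IsCompl A Astar → (∀ u : W, π u ∈ Astar ∧ u - π u ∈ A) →
        (∀ j ∈ β, (finrank K ↥(Submodule.map π (B j)) : ℝ)
            = (finrank K ↥(β.sup B) : ℝ) - (finrank K ↥((β.erase j).sup B) : ℝ))
        ∧ ((finrank K ↥(β.sup fun j => Submodule.map π (B j)) : ℝ)
            = ∑ j ∈ β, (finrank K ↥(Submodule.map π (B j)) : ℝ))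
        ∧ ((finrank K ↥A : ℝ) = (finrank K ↥(β.sup B) : ℝ)
            - ∑ j ∈ β, ((finrank K ↥(β.sup B) : ℝ) - (finrank K ↥((β.erase j).sup B) : ℝ))) := by
  classical
  obtain ⟨A, hAle, h1, h2⟩ := aux_core K (finrank K ↥(β.sup B)) W B β le_rfl
  refine ⟨A, ?_⟩
  intro Astar π hcompl hproj
  have hker : LinearMap.ker π = A := by
    ext u
    constructor
    · intro hu
      have h := (hproj u).2
      rw [LinearMap.mem_ker.mp hu, sub_zero] at h
      exact h
    · intro hu
      have ha : π u ∈ A := by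
        have := sub_mem hu (hproj u).2
        simpa using this
      have : π u ∈ A ⊓ Astar := ⟨ha, (hproj u).1⟩
      rw [disjoint_iff.mp hcompl.disjoint] at this
      simpa using this
  have hπ : ∀ p : Submodule K W,
      finrank K ↥(Submodule.map π p) = finrank K ↥(Submodule.map A.mkQ p) :=
    fun p => aux_finrank_map_eq_of_ker_eq π A.mkQ (by rw [hker, Submodule.ker_mkQ]) p
  have c1 : ∀ j ∈ β, (finrank K ↥(Submodule.map π (B j)) : ℝ)
      = (finrank K ↥(β.sup B) : ℝ) - (finrank K ↥((β.erase j).sup B) : ℝ) := by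
    intro j hj
    have h := h1 j hj
    rw [hπ (B j)]
    rw [← h]
    push_cast
    ring
  refine ⟨c1, ?_, ?_⟩
  · rw [show (β.sup fun j => Submodule.map π (B j)) = Submodule.map π (β.sup B) from
      (aux_map_finset_sup π B β).symm]
    rw [hπ (β.sup B), h2]
    push_cast
    exact Finset.sum_congr rfl fun j _ => by rw [hπ (B j)]
  · have h3 : finrank K ↥A + finrank K ↥(Submodule.map A.mkQ (β.sup B))
        = finrank K ↥(β.sup B) := by
      have h := aux_finrank_map_add A.mkQ (β.sup B)
      rw [Submodule.ker_mkQ, inf_eq_right.mpr hAle] at h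
      omega
    have e : ∑ j ∈ β, ((finrank K ↥(β.sup B) : ℝ) - (finrank K ↥((β.erase j).sup B) : ℝ))
        = (finrank K ↥(Submodule.map A.mkQ (β.sup B)) : ℝ) := by
      rw [h2]
      push_cast
      exact Finset.sum_congr rfl fun j hj => by rw [← c1 j hj, hπ (B j)]
    have h3c : (finrank K ↥A : ℝ) + (finrank K ↥(Submodule.map A.mkQ (β.sup B)) : ℝ)
        = (finrank K ↥(β.sup B) : ℝ) := by exact_mod_cast h3
    rw [e]
    linarith
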